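/- Let m ≥ 1, let g : ℝ^d → ℝ be sublinear, σ ∈ ℝ^d, Σ_1, …, Σ_m ∈ ℝ^d and b ∈ ℝ^m. Then the following are equivalent: (a) there exist w ∈ ℝ and W ∈ ℝ^d such that w + g(σ − W) ≤ 1, g(W − Σ_j) − b_j ≤ w for all j, and g(W + Σ_j) + b_j ≤ w for all j; (b) for every ζ ∈ ℝ^m with ∑_{j=1}^m |ζ_j| ≤ 1, one has g(σ + ∑_{j=1}^m ζ_j Σ_j) + ⟨b, ζ⟩ ≤ 1. (In other words, the Roos et al. approximation is exact for the cross-polytope uncertainty set.) -/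

import Mathlib

/-- Exactness of the Roos et al. approximation for the cross-polytope uncertainty set:
feasibility of the auxiliary system `(w, W)` is equivalent to the robust constraint
`g (σ + ∑ j ζ j • Σ j) + ⟨b, ζ⟩ ≤ 1` for all `ζ` with `∑ j |ζ j| ≤ 1`. -/
theorem roos_exact_cross_polytope {d m : ℕ} (hm : 1 ≤ m)
    (g : (Fin d → ℝ) → ℝ)
    (hg_add : ∀ x y, g (x + y) ≤ g x + g y)
    (hg_smul : ∀ t : ℝ, 0 ≤ t → ∀ x, g (t • x) = t * g x)
    (σ : Fin d → ℝ) (A : Fin m → (Fin d → ℝ)) (b : Fin m → ℝ) :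
    (∃ (w : ℝ) (W : Fin d → ℝ),
        w + g (σ - W) ≤ 1 ∧
        (∀ j, g (W - A j) - b j ≤ w) ∧
        (∀ j, g (W + A j) + b j ≤ w)) ↔
      (∀ ζ : Fin m → ℝ, (∑ j, |ζ j|) ≤ 1 →
        g (σ + ∑ j, ζ j • A j) + ∑ j, b j * ζ j ≤ 1) := by
  have hg0 : g 0 = 0 := by
    have := hg_smul 0 le_rfl 0
    simpa using this
  have hg_sum : ∀ (s : Finset (Fin m)) (f : Fin m → (Fin d → ℝ)),
      g (∑ j ∈ s, f j) ≤ ∑ j ∈ s, g (f j) := by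
    intro s f
    induction s using Finset.cons_induction with
    | empty => simp [hg0]
    | cons a s ha ih =>
      rw [Finset.sum_cons, Finset.sum_cons]
      exact le_trans (hg_add _ _) (by linarith)
  constructor
  · rintro ⟨w, W, h1, h2, h3⟩ ζ hζ
    set t := ∑ j, |ζ j| with ht
    have ht0 : 0 ≤ t := Finset.sum_nonneg fun j _ => abs_nonneg _
    obtain ⟨j0⟩ : Nonempty (Fin m) := ⟨⟨0, hm⟩⟩
    have hgW : g W ≤ w := by
      have h2W : g (W + W) ≤ g (W - A j0) + g (W + A j0) := by
        have hE : W + W = (W - A j0) + (W + A j0) := by module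
        rw [hE]; exact hg_add _ _
      have hE2 : g (W + W) = 2 * g W := by
        have := hg_smul 2 (by norm_num) W
        rw [← this]; congr 1; module
      nlinarith [h2 j0, h3 j0]
    set s : Fin m → ℝ := fun j => if 0 ≤ ζ j then 1 else -1 with hs
    have key : ∀ j, |ζ j| • (s j • A j) = ζ j • A j := by
      intro j
      rw [smul_smul]
      congr 1
      simp only [hs]
      split_ifs with h
      · rw [abs_of_nonneg h]; ring
      · rw [abs_of_neg (lt_of_not_ge h)]; ring
    have hdecomp : σ + ∑ j, ζ j • A j
        = (σ - W) + ((1 - t) • W + ∑ j, |ζ j| • (W + s j • A j)) := by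
      have hsum : ∑ j, |ζ j| • (W + s j • A j) = t • W + ∑ j, ζ j • A j := by
        simp only [smul_add, Finset.sum_add_distrib, key, ht, ← Finset.sum_smul]
      rw [hsum]
      module
    have step1 : g (σ + ∑ j, ζ j • A j) ≤
        g (σ - W) + ((1 - t) * g W + ∑ j, |ζ j| * g (W + s j • A j)) := by
      rw [hdecomp]
      refine (hg_add _ _).trans (add_le_add_right ?_ _)
      refine (hg_add _ _).trans ?_
      rw [hg_smul (1 - t) (by linarith) W]
      refine add_le_add_right ?_ _
      refine (hg_sum _ _).trans ?_
      apply Finset.sum_le_sum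
      intro j _
      rw [hg_smul _ (abs_nonneg _)]
    have step2 : ∀ j, |ζ j| * g (W + s j • A j) + b j * ζ j ≤ |ζ j| * w := by
      intro j
      by_cases h : 0 ≤ ζ j
      · have hsj : s j = 1 := if_pos h
        rw [hsj, one_smul, abs_of_nonneg h]
        nlinarith [h3 j]
      · have hsj : s j = -1 := if_neg h
        have hneg := lt_of_not_ge h
        rw [hsj, abs_of_neg hneg]
        have hE : W + (-1 : ℝ) • A j = W - A j := by module
        rw [hE]
        nlinarith [h2 j]
    have step3 : (∑ j, |ζ j| * g (W + s j • A j)) + ∑ j, b j * ζ j ≤ t * w := by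
      rw [ht, Finset.sum_mul, ← Finset.sum_add_distrib]
      exact Finset.sum_le_sum fun j _ => step2 j
    have hgWle : (1 - t) * g W ≤ (1 - t) * w :=
      mul_le_mul_of_nonneg_left hgW (by linarith)
    nlinarith [step1, step3, hgWle, h1]
  · intro h
    refine ⟨1, σ, by simp [hg0], ?_, ?_⟩
    · intro j
      have hc := h (Pi.single j (-1) : Fin m → ℝ) ?_
      · have hA : ∑ i, (Pi.single j (-1) : Fin m → ℝ) i • A i = -A j := by
          simp [Pi.single_apply, ite_smul]
        have hb : ∑ i, b i * (Pi.single j (-1) : Fin m → ℝ) i = -b j := by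
          simp [Pi.single_apply, mul_ite]
        rw [hA, hb] at hc
        have : σ + -A j = σ - A j := by module
        rw [this] at hc
        linarith
      · simp [Pi.single_apply, apply_ite abs]
    · intro j
      have hc := h (Pi.single j 1 : Fin m → ℝ) ?_
      · have hA : ∑ i, (Pi.single j 1 : Fin m → ℝ) i • A i = A j := by
          simp [Pi.single_apply, ite_smul]
        have hb : ∑ i, b i * (Pi.single j 1 : Fin m → ℝ) i = b j := by
          simp [Pi.single_apply, mul_ite]
        rw [hA, hb] at hc
        linarith
      · simp [Pi.single_apply, apply_ite abs]
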